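/- Coercivity of the penalized bilinear form: Let Γ be a closed C² hypersurface with bounded Weingarten map H, and for u = u_T + u_N n ∈ V_*⁰ define â_τ(u,u) := 2μ‖E_s(u_T) + u_N H‖²_{L²} + τ‖u_N‖²_{L²}. If τ > 2μ‖H‖²_{L^∞(Γ)}, then there exists c > 0 with â_τ(u,u) ≥ μ c_K² ‖u_T‖₁² + (τ - 2μ‖H‖²_{L^∞}) ‖u_N‖²_{L²} ≥ c (‖u_T‖₁² + ‖u_N‖²_{L²}) for all u ∈ V_*⁰, where c_K is the surface Korn constant. -/

import Mathlib

/-- Coercivity of the penalized bilinear form `â_τ` (abstract form).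
`VT` plays the role of the tangential `H¹` fields, `L` of the normal `L²`
components, `M` of the `L²` tensor fields; `Es` is the surface rate-of-strain
operator, `mulH : u_N ↦ u_N H` multiplication by the bounded Weingarten map
(`‖u_N H‖_{L²} ≤ ‖H‖_{L^∞} ‖u_N‖_{L²}`), `cK` the surface Korn constant on
`V_T⁰ = Eᗮ` with `E = ker E_s` the Killing fields.  If `τ > 2μ‖H‖²_{L^∞}` then
`â_τ(u,u) = 2μ‖E_s(u_T) + u_N H‖² + τ‖u_N‖²
  ≥ μ c_K² ‖u_T‖₁² + (τ - 2μ‖H‖²_{L^∞})‖u_N‖² ≥ c(‖u_T‖₁² + ‖u_N‖²)`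
for all `u = (u_T, u_N) ∈ V_*⁰`. -/
theorem penalized_form_coercive
    {VT L M : Type*}
    [NormedAddCommGroup VT] [InnerProductSpace ℝ VT] [CompleteSpace VT]
    [NormedAddCommGroup L] [InnerProductSpace ℝ L]
    [NormedAddCommGroup M] [InnerProductSpace ℝ M]
    (Es : VT →L[ℝ] M) (mulH : L →L[ℝ] M)
    (μ τ normH cK : ℝ) (hμ : 0 < μ) (hnormH : 0 ≤ normH) (hcK : 0 < cK)
    (hmulH : ∀ w : L, ‖mulH w‖ ≤ normH * ‖w‖)
    (hKorn : ∀ uT ∈ (LinearMap.ker (Es : VT →ₗ[ℝ] M))ᗮ, cK * ‖uT‖ ≤ ‖Es uT‖)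
    (hτ : 2 * μ * normH ^ 2 < τ) :
    ∃ c > 0, ∀ uT ∈ (LinearMap.ker (Es : VT →ₗ[ℝ] M))ᗮ, ∀ uN : L,
      (μ * cK ^ 2 * ‖uT‖ ^ 2 + (τ - 2 * μ * normH ^ 2) * ‖uN‖ ^ 2
          ≤ 2 * μ * ‖Es uT + mulH uN‖ ^ 2 + τ * ‖uN‖ ^ 2)
        ∧ c * (‖uT‖ ^ 2 + ‖uN‖ ^ 2)
          ≤ 2 * μ * ‖Es uT + mulH uN‖ ^ 2 + τ * ‖uN‖ ^ 2 := by
  refine ⟨min (μ * cK ^ 2) (τ - 2 * μ * normH ^ 2), lt_min (by positivity) (by linarith), ?_⟩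
  intro uT hT uN
  have hK := hKorn uT hT
  have hM := hmulH uN
  have htri : ‖Es uT‖ ≤ ‖Es uT + mulH uN‖ + ‖mulH uN‖ := by
    have := norm_sub_le (Es uT + mulH uN) (mulH uN)
    simpa using this
  have hK2 : cK ^ 2 * ‖uT‖ ^ 2 ≤ ‖Es uT‖ ^ 2 := by
    have := mul_le_mul hK hK (mul_nonneg hcK.le (norm_nonneg _)) (norm_nonneg _)
    nlinarith [this]
  have hM2 : ‖mulH uN‖ ^ 2 ≤ normH ^ 2 * ‖uN‖ ^ 2 := by
    have := mul_le_mul hM hM (norm_nonneg _) (mul_nonneg hnormH (norm_nonneg _))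
    nlinarith [this]
  have hE2 : ‖Es uT‖ ^ 2 ≤ 2 * ‖Es uT + mulH uN‖ ^ 2 + 2 * ‖mulH uN‖ ^ 2 := by
    nlinarith [sq_nonneg (‖Es uT + mulH uN‖ - ‖mulH uN‖), norm_nonneg (Es uT),
      norm_nonneg (Es uT + mulH uN), norm_nonneg (mulH uN)]
  have h1 : μ * cK ^ 2 * ‖uT‖ ^ 2 + (τ - 2 * μ * normH ^ 2) * ‖uN‖ ^ 2
      ≤ 2 * μ * ‖Es uT + mulH uN‖ ^ 2 + τ * ‖uN‖ ^ 2 := by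
    nlinarith [mul_le_mul_of_nonneg_left hK2 hμ.le, mul_le_mul_of_nonneg_left hM2 hμ.le,
      mul_le_mul_of_nonneg_left hE2 hμ.le]
  refine ⟨h1, le_trans ?_ h1⟩
  have h2 : min (μ * cK ^ 2) (τ - 2 * μ * normH ^ 2) * ‖uT‖ ^ 2 ≤ μ * cK ^ 2 * ‖uT‖ ^ 2 :=
    mul_le_mul_of_nonneg_right (min_le_left _ _) (sq_nonneg _)
  have h3 : min (μ * cK ^ 2) (τ - 2 * μ * normH ^ 2) * ‖uN‖ ^ 2
      ≤ (τ - 2 * μ * normH ^ 2) * ‖uN‖ ^ 2 :=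
    mul_le_mul_of_nonneg_right (min_le_right _ _) (sq_nonneg _)
  nlinarith [h2, h3]
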